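/- Let A and B be finite groups with a left A-action and a right B-action on a set X such that a(xb) = (ax)b, and fix x ∈ X. Then the cardinality of the intersection of orbits (Ax) ∩ (xB) divides gcd(|Ax|, |xB|). (Corollary 3.2, second part.) -/

import Mathlib

open MulAction

lemma stabilizer_subgroupOf_eq {G X : Type*} [Group G] [MulAction G X] (x : X)
    (H : Subgroup G) : stabilizer H x = (stabilizer G x).subgroupOf H := by
  ext g
  rfl

lemma orbit_subgroup_card_dvd {G X : Type*} [Group G] [MulAction G X] (x : X)
    (H : Subgroup G) (hH : stabilizer G x ≤ H) :
    Nat.card ↥(orbit H x) ∣ Nat.card ↥(orbit G x) := by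
  rw [Nat.card_coe_set_eq, Nat.card_coe_set_eq, ← index_stabilizer,
    ← index_stabilizer, stabilizer_subgroupOf_eq]
  exact Subgroup.relIndex_dvd_index_of_le hH

/-- **Corollary 3.2 (second part).** Let `A`, `B` be finite groups acting on a set `X`
on the left and right respectively, with commuting actions (the right `B`-action encoded
as a left `Bᵐᵒᵖ`-action).  For `x ∈ X`, the cardinality of the intersection of orbits
`(Ax) ∩ (xB)` divides `gcd(|Ax|, |xB|)`. -/
theorem intersection_orbit_card_dvd_gcd {A B X : Type*} [Group A] [Group B]
    [Finite A] [Finite B]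
    [MulAction A X] [MulAction Bᵐᵒᵖ X] [SMulCommClass A Bᵐᵒᵖ X] (x : X) :
    Nat.card ↥(MulAction.orbit A x ∩ MulAction.orbit Bᵐᵒᵖ x) ∣
      Nat.gcd (Nat.card ↥(MulAction.orbit A x)) (Nat.card ↥(MulAction.orbit Bᵐᵒᵖ x)) := by
  have hcomm : SMulCommClass Bᵐᵒᵖ A X := SMulCommClass.symm A Bᵐᵒᵖ X
  -- subgroup of A moving x inside the B-orbit
  let K : Subgroup A :=
    { carrier := {a : A | a • x ∈ orbit Bᵐᵒᵖ x}
      one_mem' := ⟨1, by simp⟩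
      mul_mem' := by
        rintro a a' ⟨b, hb⟩ ⟨b', hb'⟩
        beta_reduce at hb hb'
        refine ⟨b' * b, ?_⟩
        calc (b' * b) • x = b' • b • x := mul_smul ..
          _ = b' • a • x := by rw [hb]
          _ = a • b' • x := smul_comm ..
          _ = a • a' • x := by rw [hb']
          _ = (a * a') • x := (mul_smul ..).symm
      inv_mem' := by
        rintro a ⟨b, hb⟩
        beta_reduce at hb
        refine ⟨b⁻¹, ?_⟩
        have h : a • b⁻¹ • x = x := by
          rw [← smul_comm, ← hb, inv_smul_smul]
        calc b⁻¹ • x = a⁻¹ • a • b⁻¹ • x := (inv_smul_smul ..).symm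
          _ = a⁻¹ • x := by rw [h] }
  -- subgroup of Bᵐᵒᵖ moving x inside the A-orbit
  let H : Subgroup Bᵐᵒᵖ :=
    { carrier := {b : Bᵐᵒᵖ | b • x ∈ orbit A x}
      one_mem' := ⟨1, by simp⟩
      mul_mem' := by
        rintro b b' ⟨a, ha⟩ ⟨a', ha'⟩
        beta_reduce at ha ha'
        refine ⟨a' * a, ?_⟩
        calc (a' * a) • x = a' • a • x := mul_smul ..
          _ = a' • b • x := by rw [ha]
          _ = b • a' • x := smul_comm ..
          _ = b • b' • x := by rw [ha']
          _ = (b * b') • x := (mul_smul ..).symm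
      inv_mem' := by
        rintro b ⟨a, ha⟩
        beta_reduce at ha
        refine ⟨a⁻¹, ?_⟩
        have h : b • a⁻¹ • x = x := by
          rw [← smul_comm, ← ha, inv_smul_smul]
        calc a⁻¹ • x = b⁻¹ • b • a⁻¹ • x := (inv_smul_smul ..).symm
          _ = b⁻¹ • x := by rw [h] }
  have hKorbit : orbit K x = orbit A x ∩ orbit Bᵐᵒᵖ x := by
    ext y
    constructor
    · rintro ⟨⟨a, ha⟩, rfl⟩
      exact ⟨⟨a, rfl⟩, ha⟩
    · rintro ⟨⟨a, rfl⟩, hy⟩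
      exact ⟨⟨a, hy⟩, rfl⟩
  have hHorbit : orbit H x = orbit A x ∩ orbit Bᵐᵒᵖ x := by
    ext y
    constructor
    · rintro ⟨⟨b, hb⟩, rfl⟩
      exact ⟨hb, ⟨b, rfl⟩⟩
    · rintro ⟨hy, ⟨b, rfl⟩⟩
      exact ⟨⟨b, hy⟩, rfl⟩
  have hK : stabilizer A x ≤ K := by
    intro a (ha : a • x = x)
    show a • x ∈ orbit Bᵐᵒᵖ x
    rw [ha]; exact mem_orbit_self x
  have hH : stabilizer Bᵐᵒᵖ x ≤ H := by
    intro b (hb : b • x = x)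
    show b • x ∈ orbit A x
    rw [hb]; exact mem_orbit_self x
  refine Nat.dvd_gcd ?_ ?_
  · rw [← hKorbit]
    exact orbit_subgroup_card_dvd x K hK
  · rw [← hHorbit]
    exact orbit_subgroup_card_dvd x H hH
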